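/- Let F be the quotient of the free associative algebra over a field K of characteristic 0 by the ideal generated by all [ℓ²,ℓ'] with ℓ, ℓ' linear combinations of the generators. Then in F: Σ_{σ∈Sym₃} sign(σ) x_{σ(1)} y x_{σ(2)} x_{σ(3)} = −(2/3) y S₃(x₁,x₂,x₃) + (1/3) S₃(x₁,x₂,x₃) y, where S₃ is the standard polynomial of degree 3 and y, x₁, x₂, x₃ are distinct generators. -/

import Mathlib

/-- `p ~ q` when `p = ℓ² * ℓ'` and `q = ℓ' * ℓ²` for linear combinations `ℓ, ℓ'`
of the free generators; quotienting by it imposes the weak identity `[x², y] = 0`. -/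
def weakRel (K : Type*) [Field K] (X : Type*)
    (p q : FreeAlgebra K X) : Prop :=
  ∃ ℓ ∈ Submodule.span K (Set.range (FreeAlgebra.ι K (X := X))),
    ∃ ℓ' ∈ Submodule.span K (Set.range (FreeAlgebra.ι K (X := X))),
      p = ℓ ^ 2 * ℓ' ∧ q = ℓ' * ℓ ^ 2

/-- Enumerate a sum over the six permutations of `Fin 3`. -/
lemma sum_perm3 {M : Type*} [AddCommMonoid M] (f : Equiv.Perm (Fin 3) → M) :
    ∑ σ : Equiv.Perm (Fin 3), f σ =
      f 1 + (f (Equiv.swap 0 1) + (f (Equiv.swap 0 2) + (f (Equiv.swap 1 2) +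
        (f (Equiv.swap 0 1 * Equiv.swap 0 2) + f (Equiv.swap 0 2 * Equiv.swap 0 1))))) := by
  rw [show (Finset.univ : Finset (Equiv.Perm (Fin 3))) =
      {1, Equiv.swap 0 1, Equiv.swap 0 2, Equiv.swap 1 2,
       Equiv.swap 0 1 * Equiv.swap 0 2, Equiv.swap 0 2 * Equiv.swap 0 1} from by decide]
  rw [Finset.sum_insert (by decide), Finset.sum_insert (by decide),
    Finset.sum_insert (by decide), Finset.sum_insert (by decide),
    Finset.sum_insert (by decide), Finset.sum_singleton]

/-- The key free-ring computation: if each `x_i a + a x_i` commutes with the other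
generators, then `S₃ a = 3 A + 2 a S₃`. -/
lemma key {R : Type*} [Ring R] (a b c d : R)
    (hbc : (b*a + a*b)*c = c*(b*a + a*b))
    (hbd : (b*a + a*b)*d = d*(b*a + a*b))
    (hcb : (c*a + a*c)*b = b*(c*a + a*c))
    (hcd : (c*a + a*c)*d = d*(c*a + a*c))
    (hdb : (d*a + a*d)*b = b*(d*a + a*d))
    (hdc : (d*a + a*d)*c = c*(d*a + a*d)) :
    (b*c*d - b*d*c - c*b*d + c*d*b + d*b*c - d*c*b) * a
      = ((b*a*c*d - b*a*d*c - c*a*b*d + c*a*d*b + d*a*b*c - d*a*c*b) + (b*a*c*d - b*a*d*c - c*a*b*d + c*a*d*b + d*a*b*c - d*a*c*b) + (b*a*c*d - b*a*d*c - c*a*b*d + c*a*d*b + d*a*b*c - d*a*c*b)) + (a * (b*c*d - b*d*c - c*b*d + c*d*b + d*b*c - d*c*b) + a * (b*c*d - b*d*c - c*b*d + c*d*b + d*b*c - d*c*b)) := by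
  have comb : (((b*a*c*d - b*a*d*c - c*a*b*d + c*a*d*b + d*a*b*c - d*a*c*b) + (b*a*c*d - b*a*d*c - c*a*b*d + c*a*d*b + d*a*b*c - d*a*c*b) + (b*a*c*d - b*a*d*c - c*a*b*d + c*a*d*b + d*a*b*c - d*a*c*b)) + (a * (b*c*d - b*d*c - c*b*d + c*d*b + d*b*c - d*c*b) + a * (b*c*d - b*d*c - c*b*d + c*d*b + d*b*c - d*c*b))) - (b*c*d - b*d*c - c*b*d + c*d*b + d*b*c - d*c*b) * a
      = (b * ((d*a + a*d)*c - c*(d*a + a*d)) + ((d*a + a*d)*b - b*(d*a + a*d)) * c - ((c*a + a*c)*b - b*(c*a + a*c)) * d)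
      - (b * ((c*a + a*c)*d - d*(c*a + a*c)) + ((c*a + a*c)*b - b*(c*a + a*c)) * d - ((d*a + a*d)*b - b*(d*a + a*d)) * c)
      - (c * ((d*a + a*d)*b - b*(d*a + a*d)) + ((d*a + a*d)*c - c*(d*a + a*d)) * b - ((b*a + a*b)*c - c*(b*a + a*b)) * d)
      + (c * ((b*a + a*b)*d - d*(b*a + a*b)) + ((b*a + a*b)*c - c*(b*a + a*b)) * d - ((d*a + a*d)*c - c*(d*a + a*d)) * b)
      + (d * ((c*a + a*c)*b - b*(c*a + a*c)) + ((c*a + a*c)*d - d*(c*a + a*c)) * b - ((b*a + a*b)*d - d*(b*a + a*b)) * c)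
      - (d * ((b*a + a*b)*c - c*(b*a + a*b)) + ((b*a + a*b)*d - d*(b*a + a*b)) * c - ((c*a + a*c)*d - d*(c*a + a*c)) * b) := by
    noncomm_ring
  rw [hbc, hbd, hcb, hcd, hdb, hdc] at comb
  simp only [sub_self, mul_zero, zero_mul, add_zero, zero_add, sub_zero, neg_zero,
    zero_sub] at comb
  exact (sub_eq_zero.mp comb).symm

/-- In the quotient algebra, `m i * m j + m j * m i` commutes with every generator. -/
lemma central (K : Type*) [Field K] (i j k : ℕ) :
    (RingQuot.mkAlgHom K (weakRel K ℕ) (FreeAlgebra.ι K i) *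
        RingQuot.mkAlgHom K (weakRel K ℕ) (FreeAlgebra.ι K j) +
      RingQuot.mkAlgHom K (weakRel K ℕ) (FreeAlgebra.ι K j) *
        RingQuot.mkAlgHom K (weakRel K ℕ) (FreeAlgebra.ι K i)) *
      RingQuot.mkAlgHom K (weakRel K ℕ) (FreeAlgebra.ι K k)
    = RingQuot.mkAlgHom K (weakRel K ℕ) (FreeAlgebra.ι K k) *
      (RingQuot.mkAlgHom K (weakRel K ℕ) (FreeAlgebra.ι K i) *
          RingQuot.mkAlgHom K (weakRel K ℕ) (FreeAlgebra.ι K j) +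
        RingQuot.mkAlgHom K (weakRel K ℕ) (FreeAlgebra.ι K j) *
          RingQuot.mkAlgHom K (weakRel K ℕ) (FreeAlgebra.ι K i)) := by
  have mem : ∀ n : ℕ,
      FreeAlgebra.ι K n ∈ Submodule.span K (Set.range (FreeAlgebra.ι K (X := ℕ))) :=
    fun n => Submodule.subset_span ⟨n, rfl⟩
  have rel : ∀ ℓ ℓ' : FreeAlgebra K ℕ,
      ℓ ∈ Submodule.span K (Set.range (FreeAlgebra.ι K (X := ℕ))) →
      ℓ' ∈ Submodule.span K (Set.range (FreeAlgebra.ι K (X := ℕ))) →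
      RingQuot.mkAlgHom K (weakRel K ℕ) (ℓ ^ 2 * ℓ')
        = RingQuot.mkAlgHom K (weakRel K ℕ) (ℓ' * ℓ ^ 2) :=
    fun ℓ ℓ' h h' => RingQuot.mkAlgHom_rel K ⟨ℓ, h, ℓ', h', rfl, rfl⟩
  have h1 := rel (FreeAlgebra.ι K i + FreeAlgebra.ι K j) (FreeAlgebra.ι K k)
    (add_mem (mem i) (mem j)) (mem k)
  have h2 := rel (FreeAlgebra.ι K i) (FreeAlgebra.ι K k) (mem i) (mem k)
  have h3 := rel (FreeAlgebra.ι K j) (FreeAlgebra.ι K k) (mem j) (mem k)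
  simp only [map_mul, map_pow, map_add] at h1 h2 h3
  set A := RingQuot.mkAlgHom K (weakRel K ℕ) (FreeAlgebra.ι K i)
  set B := RingQuot.mkAlgHom K (weakRel K ℕ) (FreeAlgebra.ι K j)
  set C := RingQuot.mkAlgHom K (weakRel K ℕ) (FreeAlgebra.ι K k)
  have e : (A*B + B*A)*C - C*(A*B + B*A)
      = ((A + B)^2*C - C*(A + B)^2) - (A^2*C - C*A^2) - (B^2*C - C*B^2) := by
    noncomm_ring
  rw [h1, h2, h3] at e
  simp only [sub_self, sub_zero, zero_sub, neg_zero] at e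
  exact sub_eq_zero.mp e

/-- Scalar bookkeeping over a field of characteristic zero. -/
lemma scal {K M : Type*} [Field K] [CharZero K] [AddCommGroup M] [Module K M]
    (A S1 S2 : M) (h : S2 = A + A + A + (S1 + S1)) :
    A = -(((2 : K) * (3 : K)⁻¹) • S1) + (3 : K)⁻¹ • S2 := by
  subst h
  have h3 : (3 : K) ≠ 0 := three_ne_zero
  match_scalars <;> field_simp <;> ring

theorem stmt10 (K : Type*) [Field K] [CharZero K]
    (y : RingQuot (weakRel K ℕ)) (x : Fin 3 → RingQuot (weakRel K ℕ))
    (hy : y = RingQuot.mkAlgHom K (weakRel K ℕ) (FreeAlgebra.ι K 0))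
    (hx : ∀ i : Fin 3,
      x i = RingQuot.mkAlgHom K (weakRel K ℕ) (FreeAlgebra.ι K ((i : ℕ) + 1))) :
    (∑ σ : Equiv.Perm (Fin 3),
        (Equiv.Perm.sign σ : ℤ) • (x (σ 0) * y * x (σ 1) * x (σ 2))) =
      -(((2 : K) * (3 : K)⁻¹) •
          (y * ∑ σ : Equiv.Perm (Fin 3),
            (Equiv.Perm.sign σ : ℤ) • (x (σ 0) * x (σ 1) * x (σ 2))))
        + (3 : K)⁻¹ •
          ((∑ σ : Equiv.Perm (Fin 3),
            (Equiv.Perm.sign σ : ℤ) • (x (σ 0) * x (σ 1) * x (σ 2))) * y) := by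
  have hS : (∑ σ : Equiv.Perm (Fin 3),
      (Equiv.Perm.sign σ : ℤ) • (x (σ 0) * x (σ 1) * x (σ 2)))
      = x 0 * x 1 * x 2 - x 0 * x 2 * x 1 - x 1 * x 0 * x 2 + x 1 * x 2 * x 0
        + x 2 * x 0 * x 1 - x 2 * x 1 * x 0 := by
    rw [sum_perm3]
    simp only [show ((Equiv.Perm.sign (1 : Equiv.Perm (Fin 3))) : ℤ) = 1 from by decide,
      show (1 : Equiv.Perm (Fin 3)) 0 = 0 from by decide,
      show (1 : Equiv.Perm (Fin 3)) 1 = 1 from by decide,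
      show (1 : Equiv.Perm (Fin 3)) 2 = 2 from by decide,
      show ((Equiv.Perm.sign (Equiv.swap 0 1 : Equiv.Perm (Fin 3))) : ℤ) = -1 from by decide,
      show (Equiv.swap 0 1 : Equiv.Perm (Fin 3)) 0 = 1 from by decide,
      show (Equiv.swap 0 1 : Equiv.Perm (Fin 3)) 1 = 0 from by decide,
      show (Equiv.swap 0 1 : Equiv.Perm (Fin 3)) 2 = 2 from by decide,
      show ((Equiv.Perm.sign (Equiv.swap 0 2 : Equiv.Perm (Fin 3))) : ℤ) = -1 from by decide,
      show (Equiv.swap 0 2 : Equiv.Perm (Fin 3)) 0 = 2 from by decide,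
      show (Equiv.swap 0 2 : Equiv.Perm (Fin 3)) 1 = 1 from by decide,
      show (Equiv.swap 0 2 : Equiv.Perm (Fin 3)) 2 = 0 from by decide,
      show ((Equiv.Perm.sign (Equiv.swap 1 2 : Equiv.Perm (Fin 3))) : ℤ) = -1 from by decide,
      show (Equiv.swap 1 2 : Equiv.Perm (Fin 3)) 0 = 0 from by decide,
      show (Equiv.swap 1 2 : Equiv.Perm (Fin 3)) 1 = 2 from by decide,
      show (Equiv.swap 1 2 : Equiv.Perm (Fin 3)) 2 = 1 from by decide,
      show ((Equiv.Perm.sign (Equiv.swap 0 1 * Equiv.swap 0 2 : Equiv.Perm (Fin 3))) : ℤ) = 1 from by decide,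
      show (Equiv.swap 0 1 * Equiv.swap 0 2 : Equiv.Perm (Fin 3)) 0 = 2 from by decide,
      show (Equiv.swap 0 1 * Equiv.swap 0 2 : Equiv.Perm (Fin 3)) 1 = 0 from by decide,
      show (Equiv.swap 0 1 * Equiv.swap 0 2 : Equiv.Perm (Fin 3)) 2 = 1 from by decide,
      show ((Equiv.Perm.sign (Equiv.swap 0 2 * Equiv.swap 0 1 : Equiv.Perm (Fin 3))) : ℤ) = 1 from by decide,
      show (Equiv.swap 0 2 * Equiv.swap 0 1 : Equiv.Perm (Fin 3)) 0 = 1 from by decide,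
      show (Equiv.swap 0 2 * Equiv.swap 0 1 : Equiv.Perm (Fin 3)) 1 = 2 from by decide,
      show (Equiv.swap 0 2 * Equiv.swap 0 1 : Equiv.Perm (Fin 3)) 2 = 0 from by decide,
      one_smul, neg_smul]
    noncomm_ring
  have hA : (∑ σ : Equiv.Perm (Fin 3),
      (Equiv.Perm.sign σ : ℤ) • (x (σ 0) * y * x (σ 1) * x (σ 2)))
      = x 0 * y * x 1 * x 2 - x 0 * y * x 2 * x 1 - x 1 * y * x 0 * x 2
        + x 1 * y * x 2 * x 0 + x 2 * y * x 0 * x 1 - x 2 * y * x 1 * x 0 := by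
    rw [sum_perm3]
    simp only [show ((Equiv.Perm.sign (1 : Equiv.Perm (Fin 3))) : ℤ) = 1 from by decide,
      show (1 : Equiv.Perm (Fin 3)) 0 = 0 from by decide,
      show (1 : Equiv.Perm (Fin 3)) 1 = 1 from by decide,
      show (1 : Equiv.Perm (Fin 3)) 2 = 2 from by decide,
      show ((Equiv.Perm.sign (Equiv.swap 0 1 : Equiv.Perm (Fin 3))) : ℤ) = -1 from by decide,
      show (Equiv.swap 0 1 : Equiv.Perm (Fin 3)) 0 = 1 from by decide,
      show (Equiv.swap 0 1 : Equiv.Perm (Fin 3)) 1 = 0 from by decide,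
      show (Equiv.swap 0 1 : Equiv.Perm (Fin 3)) 2 = 2 from by decide,
      show ((Equiv.Perm.sign (Equiv.swap 0 2 : Equiv.Perm (Fin 3))) : ℤ) = -1 from by decide,
      show (Equiv.swap 0 2 : Equiv.Perm (Fin 3)) 0 = 2 from by decide,
      show (Equiv.swap 0 2 : Equiv.Perm (Fin 3)) 1 = 1 from by decide,
      show (Equiv.swap 0 2 : Equiv.Perm (Fin 3)) 2 = 0 from by decide,
      show ((Equiv.Perm.sign (Equiv.swap 1 2 : Equiv.Perm (Fin 3))) : ℤ) = -1 from by decide,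
      show (Equiv.swap 1 2 : Equiv.Perm (Fin 3)) 0 = 0 from by decide,
      show (Equiv.swap 1 2 : Equiv.Perm (Fin 3)) 1 = 2 from by decide,
      show (Equiv.swap 1 2 : Equiv.Perm (Fin 3)) 2 = 1 from by decide,
      show ((Equiv.Perm.sign (Equiv.swap 0 1 * Equiv.swap 0 2 : Equiv.Perm (Fin 3))) : ℤ) = 1 from by decide,
      show (Equiv.swap 0 1 * Equiv.swap 0 2 : Equiv.Perm (Fin 3)) 0 = 2 from by decide,
      show (Equiv.swap 0 1 * Equiv.swap 0 2 : Equiv.Perm (Fin 3)) 1 = 0 from by decide,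
      show (Equiv.swap 0 1 * Equiv.swap 0 2 : Equiv.Perm (Fin 3)) 2 = 1 from by decide,
      show ((Equiv.Perm.sign (Equiv.swap 0 2 * Equiv.swap 0 1 : Equiv.Perm (Fin 3))) : ℤ) = 1 from by decide,
      show (Equiv.swap 0 2 * Equiv.swap 0 1 : Equiv.Perm (Fin 3)) 0 = 1 from by decide,
      show (Equiv.swap 0 2 * Equiv.swap 0 1 : Equiv.Perm (Fin 3)) 1 = 2 from by decide,
      show (Equiv.swap 0 2 * Equiv.swap 0 1 : Equiv.Perm (Fin 3)) 2 = 0 from by decide,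
      one_smul, neg_smul]
    noncomm_ring
  refine scal (K := K) (M := RingQuot (weakRel K ℕ)) _ _ _ ?_
  rw [hS, hA]
  have hcomm : ∀ p q : Fin 3, (x p * y + y * x p) * x q = x q * (x p * y + y * x p) := by
    intro p q
    rw [hy, hx p, hx q]
    exact central K ((p : ℕ) + 1) 0 ((q : ℕ) + 1)
  exact key y (x 0) (x 1) (x 2) (hcomm 0 1) (hcomm 0 2) (hcomm 1 0) (hcomm 1 2)
    (hcomm 2 0) (hcomm 2 1)
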